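/- arXiv:1904.05786 — 5 statements merged into one kernel-verified Lean document; each statement's English description precedes it below -/
import Mathlib

section
/- In the Hopf superalgebra H_n (n≥1), the element ι = (1/n)(1+K+⋯+K^{n-1})X is a two-sided cointegral: xι = ε(x)ι and ιx = ε(x)ι for all x ∈ H_n. -/
/-!
STATEMENT 2.  In the Hopf superalgebra `H_n` (`n ≥ 1`), the element
`ι = (1/n)(1 + K + ⋯ + Kⁿ⁻¹)X` is a two-sided cointegral: `x·ι = ε(x)·ι` and
`ι·x = ε(x)·ι` for all `x ∈ H_n`.  (`k` has characteristic zero, so `1/n` makes sense.)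
-/

/-- Basis index of `H_n`: `(i, ε)` encodes the basis element `Kⁱ Xᵉ` (with `|Kⁱ| = 0`,
`|KⁱX| = 1`). -/
abbrev HnIdx (n : ℕ) := ZMod n × Bool

/-- `H_n` as the vector space of coefficient functions on its basis. -/
abbrev Hn (k : Type) (n : ℕ) := HnIdx n → k

/-- The tensor square `H_n ⊗ H_n`, as coefficient functions on pairs of basis vectors. -/
abbrev HnT (k : Type) (n : ℕ) := HnIdx n × HnIdx n → k

variable {k : Type} [Field k] {n : ℕ}

namespace Hn

/-- Multiplication of `H_n`: determined by `Kⁱ·Kʲ = Kⁱ⁺ʲ`, `XK = KX`, `X² = 0`, `Kⁿ = 1`. -/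
noncomputable def mul [NeZero n] (f g : Hn k n) : Hn k n := fun p =>
  (∑ j : ZMod n, f (j, false) * g (p.1 - j, p.2)) +
    (if p.2 = true then ∑ j : ZMod n, f (j, true) * g (p.1 - j, false) else 0)

/-- The unit `1 = K⁰`. -/
noncomputable def one : Hn k n := fun p => if p = ((0 : ZMod n), false) then 1 else 0

/-- The counit: `ε(Kⁱ) = 1`, `ε(KⁱX) = 0`. -/
noncomputable def counit [NeZero n] (f : Hn k n) : k := ∑ j : ZMod n, f (j, false)

/-- The coproduct: `Δ(Kⁱ) = Kⁱ ⊗ Kⁱ` and `Δ(KⁱX) = Kⁱ⁺¹ ⊗ KⁱX + KⁱX ⊗ Kⁱ`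
(extending `Δ(X) = K ⊗ X + X ⊗ 1` as a superalgebra morphism). -/
noncomputable def comul (f : Hn k n) : HnT k n := fun q =>
  match q with
  | ((a, false), (b, false)) => if a = b then f (a, false) else 0
  | ((a, false), (b, true)) => if a = b + 1 then f (b, true) else 0
  | ((a, true), (b, false)) => if a = b then f (a, true) else 0
  | ((_, true), (_, true)) => 0

/-- The antipode: `S(Kⁱ) = K⁻ⁱ`, `S(KⁱX) = -K⁻ⁱ⁻¹X` (from `S(X) = -K⁻¹X`, `S(K) = K⁻¹`). -/
noncomputable def antipode (f : Hn k n) : Hn k n := fun p =>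
  match p with
  | (i, false) => f (-i, false)
  | (i, true) => -f (-i - 1, true)

/-- Multiplication on the tensor square `H_n ⊗ H_n` with the Koszul sign rule. -/
noncomputable def tmul [NeZero n] (F G : HnT k n) : HnT k n := fun q =>
  ∑ x : HnIdx n × HnIdx n, ∑ y : HnIdx n × HnIdx n,
    if x.1.1 + y.1.1 = q.1.1 ∧ x.2.1 + y.2.1 = q.2.1 ∧
        ¬(x.1.2 = true ∧ y.1.2 = true) ∧ ¬(x.2.2 = true ∧ y.2.2 = true) ∧
        (x.1.2 || y.1.2) = q.1.2 ∧ (x.2.2 || y.2.2) = q.2.2 then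
      (if x.2.2 = true ∧ y.1.2 = true then (-1 : k) else 1) * F x * G y
    else 0

/-- The element `X ∈ H_n`. -/
noncomputable def Xel : Hn k n := fun p => if p = ((0 : ZMod n), true) then 1 else 0

/-- The element `K ∈ H_n`. -/
noncomputable def Kel : Hn k n := fun p => if p = ((1 : ZMod n), false) then 1 else 0

/-- The element `K⁻¹ ∈ H_n`. -/
noncomputable def KelInv : Hn k n := fun p => if p = ((-1 : ZMod n), false) then 1 else 0

/-- The two-sided cointegral `ι = (1/n)(1 + K + ⋯ + Kⁿ⁻¹)X` of `H_n`. -/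
noncomputable def iota : Hn k n := fun p => if p.2 = true then (n : k)⁻¹ else 0

/-- The (Hopf super-)subalgebra `B = k⟨K^±1 | Kⁿ = 1⟩` of `H_n`, on the basis `{Kⁱ}`. -/
abbrev Bsub (k : Type) (n : ℕ) := ZMod n → k

/-- Multiplication of `B` (convolution on `ℤ/n`). -/
noncomputable def bmul [NeZero n] (b b' : Bsub k n) : Bsub k n := fun i =>
  ∑ j : ZMod n, b j * b' (i - j)

/-- The unit of `B`. -/
noncomputable def bone : Bsub k n := fun i => if i = 0 then 1 else 0

/-- The counit of `B`: `ε_B(Kⁱ) = 1`. -/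
noncomputable def bcounit [NeZero n] (b : Bsub k n) : k := ∑ i : ZMod n, b i

/-- The antipode of `B`: `S_B(Kⁱ) = K⁻ⁱ`. -/
noncomputable def bantipode (b : Bsub k n) : Bsub k n := fun i => b (-i)

/-- The inclusion `i_B : B → H_n`. -/
noncomputable def iB (b : Bsub k n) : Hn k n := fun p => if p.2 = true then 0 else b p.1

/-- The Hopf projection `π_B : H_n → B`, killing `X`. -/
noncomputable def piB (f : Hn k n) : Bsub k n := fun i => f (i, false)

/-- The relative right integral `μ = μ_Λ ⊗ id_B : H_n → B`:
`μ(Kⁱ) = 0`, `μ(KⁱX) = Kⁱ`. -/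
noncomputable def mu (f : Hn k n) : Bsub k n := fun i => f (i, true)

end Hn

open Hn in
/-- `ι = (1/n)(1 + K + ⋯ + Kⁿ⁻¹)X ∈ H_n` is a two-sided cointegral. -/
theorem statement_2 {k : Type} [Field k] [CharZero k] {n : ℕ} [NeZero n] (x : Hn k n) :
    mul x iota = counit x • iota ∧ mul iota x = counit x • iota := by
  constructor
  · funext p
    obtain ⟨i, b⟩ := p
    cases b <;>
      simp [mul, iota, counit, Finset.sum_mul]
  · funext p
    obtain ⟨i, b⟩ := p
    cases b <;>
      simp [mul, iota, counit, Finset.mul_sum, mul_comm]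
    · exact Fintype.sum_equiv (Equiv.subLeft i) _ _ (fun j => rfl)
end

section
/- In H_n (n≥1), let B be the subalgebra generated by K^{±1}, so H_n ≅ Λ_k ⊗ B as superalgebras. The map μ : H_n → B defined by μ(K^i)=0 and μ(K^iX)=K^i for all i is B-linear (μ(bx)=bμ(x) for b∈B) and satisfies the relative right integral identity (μ ⊗ id)∘Δ = i_B ∘ μ, where i_B : B → H_n is the inclusion. -/
variable {k : Type} [Field k] {n : ℕ}

open Hn in
/-- `μ : H_n → B` (`μ(Kⁱ) = 0`, `μ(KⁱX) = Kⁱ`) is `B`-linear and satisfies the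
relative right integral identity: applying `μ` to the first leg of `Δ_H(f)` gives
`Δ_B(μ(f))` with the second leg included via `i_B`. -/
theorem statement_3 {k : Type} [Field k] {n : ℕ} [NeZero n] :
    -- B-linearity: `μ(b·x) = b·μ(x)` for `b ∈ B`
    (∀ (b : Bsub k n) (x : Hn k n), mu (mul (iB b) x) = bmul b (mu x)) ∧
    -- relative integral identity `(μ ⊗ id_H) ∘ Δ_H = (id_B ⊗ i_B) ∘ Δ_B ∘ μ`, written on
    -- coefficients: the `(Kⁱ ⊗ basis x)`-coefficient of `(μ ⊗ id)(Δ f)` is the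
    -- corresponding coefficient of `(id_B ⊗ i_B)(Δ_B (μ f))`.
    (∀ (f : Hn k n) (i : ZMod n) (x : HnIdx n),
      comul f ((i, true), x) = if x.2 = false ∧ x.1 = i then mu f i else 0) := by
  constructor
  · intro b x
    funext i
    simp only [Hn.mu, Hn.mul, Hn.iB, Hn.bmul]
    simp
  · intro f i x
    obtain ⟨a, (_|_)⟩ := x <;> simp [Hn.comul, Hn.mu, eq_comm]
end

section
/- In H_n (n≥1), the integral μ (with μ(K^i)=0, μ(K^iX)=K^i) satisfies μ(Kx) = (-1)^{|μ|} S_B(μ(S(x))) for all homogeneous x ∈ H_n; i.e. the distinguished group-like for μ is b = K. -/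
variable {k : Type} [Field k] {n : ℕ}

open Hn in
/-- `μ(K·x) = (-1)^{|μ|} S_B(μ(S(x)))` with `|μ| = 1`; the distinguished
group-like of `μ` is `b = K`. -/
theorem statement_4 {k : Type} [Field k] {n : ℕ} [NeZero n] (x : Hn k n) :
    mu (mul Kel x) = ((-1 : k) ^ (1 : ℕ)) • bantipode (mu (antipode x)) := by
  funext i
  simp only [mu, mul, Kel, bantipode, antipode, Pi.smul_apply, smul_eq_mul, pow_one]
  rw [Finset.sum_eq_single (1 : ZMod n)]
  · simp [Finset.sum_eq_single (1 : ZMod n)]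
  · intro b _ hb; simp [hb]
  · simp
end

section
/- In H_n (n≥1), the two-sided cointegral ι = (1/n)(Σ_{i=0}^{n-1} K^i)X satisfies the cotrace identity: ι_{(2)} ⊗ ι_{(1)} = (1 ⊗ K)·(ι_{(1)} ⊗ ι_{(2)}), where Δ(ι) = Σ ι_{(1)} ⊗ ι_{(2)}. -/
variable {k : Type} [Field k] {n : ℕ}

namespace Hn

/-- The super flip `τ` on `H_n ⊗ H_n` (Koszul sign convention). -/
noncomputable def flipT (F : HnT k n) : HnT k n := fun q =>
  (if q.1.2 = true ∧ q.2.2 = true then (-1 : k) else 1) * F (q.2, q.1)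

/-- The element `1 ⊗ K ∈ H_n ⊗ H_n`. -/
noncomputable def oneTensorK : HnT k n := fun q =>
  if q = (((0 : ZMod n), false), ((1 : ZMod n), false)) then 1 else 0

end Hn

open Hn in
/-- the cotrace identity `ι₍₂₎ ⊗ ι₍₁₎ = (1 ⊗ K)·(ι₍₁₎ ⊗ ι₍₂₎)` in
`H_n ⊗ H_n` (super flip, Koszul signs). -/
theorem statement_5 {k : Type} [Field k] [CharZero k] {n : ℕ} [NeZero n] :
    flipT (comul (iota : Hn k n)) = tmul oneTensorK (comul iota) := by
  have key : ∀ G : HnT k n, ∀ q : HnIdx n × HnIdx n,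
      tmul oneTensorK G q = G ((q.1.1, q.1.2), (q.2.1 - 1, q.2.2)) := by
    intro G q
    unfold tmul oneTensorK
    rw [Finset.sum_eq_single (((0 : ZMod n), false), ((1 : ZMod n), false))]
    · rw [Finset.sum_eq_single (((q.1.1 : ZMod n), q.1.2), ((q.2.1 - 1 : ZMod n), q.2.2))]
      · rcases q with ⟨⟨a, ea⟩, ⟨b, eb⟩⟩
        cases ea <;> cases eb <;> simp [sub_eq_iff_eq_add', add_comm]
      · rintro ⟨⟨c, ec⟩, ⟨d, ed⟩⟩ _ hy
        rcases q with ⟨⟨a, ea⟩, ⟨b, eb⟩⟩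
        rw [if_neg]
        rintro ⟨h1, h2, -, -, h5, h6⟩
        simp only [zero_add] at h1 h2 h5 h6
        apply hy
        simp_all [eq_sub_iff_add_eq, add_comm]
      · intro h; exact absurd (Finset.mem_univ _) h
    · rintro ⟨⟨c, ec⟩, ⟨d, ed⟩⟩ _ hx
      refine Finset.sum_eq_zero fun y _ => ?_
      simp only [if_neg hx, mul_zero, zero_mul, ite_self]
    · intro h; exact absurd (Finset.mem_univ _) h
  funext q
  rw [key]
  rcases q with ⟨⟨a, ea⟩, ⟨b, eb⟩⟩
  cases ea <;> cases eb <;>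
    simp [flipT, comul, iota, eq_sub_iff_add_eq, eq_comm, sub_eq_iff_eq_add]
end

section
/- Compute: for the Hopf superalgebra H_n with ρ: a character sending K ↦ q (q an n-th root of unity), the Kuperberg-type contraction for the genus-2 Heegaard diagram of the left trefoil complement — pairing Δ^{(5)} of the cointegral X against μ along β₁ and π_B along β₂ with one antipode — evaluates to 1 - q + q², the Alexander polynomial of the trefoil up to a unit. Concretely: (ψ(β₁*)⊗ψ(β₂*))(μ(X)⊗1 + μ(K·S(X))⊗K + μ(K·K^{-1}·X)⊗K²) = 1 - q + q², where ψ(β₁*)=ε_B and ψ(β₂*)(K)=q. -/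
variable {k : Type} [Field k] {n : ℕ}

namespace Hn

/-- `1 = K⁰` as an element of `B`. -/
noncomputable def bOne : Bsub k n := fun i => if i = 0 then 1 else 0

/-- `K` as an element of `B`. -/
noncomputable def bK : Bsub k n := fun i => if i = 1 then 1 else 0

/-- `K²` as an element of `B`. -/
noncomputable def bK2 : Bsub k n := fun i => if i = 2 then 1 else 0

/-- The character `ψ(β₂*) : B → k` determined by `K ↦ q`. -/
noncomputable def psiQ [NeZero n] (q : k) (b : Bsub k n) : k := ∑ i : ZMod n, b i * q ^ i.val

end Hn

open Hn in
/-- the Kuperberg contraction for the left trefoil diagram computes to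
`1 - q + q²`:
`ε_B(μ(X))·ψ(1) + ε_B(μ(K·S(X)))·ψ(K) + ε_B(μ(K·K⁻¹·X))·ψ(K²) = 1 - q + q²`. -/
theorem statement_15 {k : Type} [Field k] {n : ℕ} [NeZero n] (q : k) (hq : q ^ n = 1) :
    bcounit (mu (Xel : Hn k n)) * psiQ q (bOne : Bsub k n)
      + bcounit (mu (mul Kel (antipode Xel) : Hn k n)) * psiQ q (bK : Bsub k n)
      + bcounit (mu (mul Kel (mul KelInv Xel) : Hn k n)) * psiQ q (bK2 : Bsub k n)
    = 1 - q + q ^ 2 := by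
  have hpow : ∀ m : ℕ, q ^ ((m : ZMod n)).val = q ^ m := by
    intro m
    rw [ZMod.val_natCast]
    conv_rhs => rw [← Nat.div_add_mod m n, pow_add, pow_mul, hq, one_pow, one_mul]
  simp only [bcounit, mu, Xel, Kel, KelInv, bOne, bK, bK2, psiQ, antipode, mul,
    if_pos rfl, Prod.mk.injEq]
  simp only [Prod.ext_iff, ite_and, ← mul_ite_zero,
    Finset.sum_ite_eq', Finset.mem_univ, if_true, if_false]
  simp only [mul_zero, zero_mul, mul_one, one_mul, Finset.sum_const_zero, add_zero, zero_add,
    mul_ite_zero, Finset.sum_ite_eq', Finset.mem_univ, if_true,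
    neg_sub, sub_neg_eq_add]
  have h0 := hpow 0
  have h1 := hpow 1
  have h2 := hpow 2
  push_cast at h0 h1 h2
  simp only [mul_ite, ite_mul, zero_mul, mul_zero, one_mul, mul_one, mul_neg,
    Finset.sum_ite_eq, Finset.sum_ite_eq', Finset.mem_univ, if_true, if_false,
    Bool.false_eq_true, reduceIte, Finset.sum_const_zero, add_zero, zero_add, h1, h2]
  simp only [sub_sub, sub_eq_zero, ite_self, Finset.sum_const_zero, add_zero,
    Finset.sum_ite_eq, Finset.sum_ite_eq', Finset.mem_univ, if_true, h0]
  have A : (∑ x : ZMod n, ∑ x_1 : ZMod n,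
      -if x_1 = x + 1 then if x_1 = 1 then (1:k) else 0 else 0) = -1 := by
    simp [Finset.sum_ite_eq', add_eq_right]
  have B : (∑ x : ZMod n, ∑ x_1 : ZMod n,
      if x = 1 + x_1 then if x_1 = -1 then (1:k) else 0 else 0) = 1 := by
    rw [Finset.sum_comm]
    simp [Finset.sum_ite_eq]
  rw [A, B]
  ring
end
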